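/- Suppose P : X → ℝ is Gateaux differentiable with derivative A, i.e., for all v, w ∈ X the function t ↦ P(w + t·v) is differentiable at t = 0 with derivative ⟪A w, v⟫, and define the energy functional E(v) := P(v) − ⟪f, v⟫. Then for every closed subspace X_H ⊆ X with Galerkin solution u_H⋆ and every v_H ∈ X_H: (α/2)·‖v_H − u_H⋆‖² ≤ E(v_H) − E(u_H⋆) ≤ (L/2)·‖v_H − u_H⋆‖². -/

import Mathlib

open RealInnerProductSpace

/-- Energy equivalence: if `P : X → ℝ` is Gateaux differentiable with derivative `A`
(i.e. `t ↦ P(w + t v)` has derivative `⟪A w, v⟫` at `t = 0`) and `E(v) := P(v) − ⟪f, v⟫`,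
then for the Galerkin solution `uH` on a closed subspace `K` and every `vH ∈ K`:
`(α/2)‖vH − uH‖² ≤ E(vH) − E(uH) ≤ (L/2)‖vH − uH‖²`. -/
theorem stmt_4 {X : Type*} [NormedAddCommGroup X] [InnerProductSpace ℝ X] [CompleteSpace X]
    (A : X → X) (f : X) (α L : ℝ) (hα : 0 < α) (hαL : α ≤ L)
    (hmono : ∀ v w : X, α * ‖w - v‖ ^ 2 ≤ ⟪A w - A v, w - v⟫)
    (hlip : ∀ v w : X, ‖A w - A v‖ ≤ L * ‖w - v‖)
    (P : X → ℝ)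
    (hP : ∀ w v : X, HasDerivAt (fun t : ℝ => P (w + t • v)) (⟪A w, v⟫) 0)
    (E : X → ℝ) (hE : ∀ v : X, E v = P v - ⟪f, v⟫)
    (K : Submodule ℝ X) (hK : IsClosed (K : Set X))
    (uH : X) (huHmem : uH ∈ K) (huH : ∀ v ∈ K, ⟪A uH, v⟫ = ⟪f, v⟫) :
    ∀ vH ∈ K,
      α / 2 * ‖vH - uH‖ ^ 2 ≤ E vH - E uH ∧ E vH - E uH ≤ L / 2 * ‖vH - uH‖ ^ 2 := by
  intro vH hvH
  set e := vH - uH with he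
  have heK : e ∈ K := K.sub_mem hvH huHmem
  have hfe : ⟪f, e⟫ = ⟪A uH, e⟫ := (huH e heK).symm
  set g : ℝ → ℝ := fun t => E (uH + t • e) with hg
  -- derivative of g
  have hg' : ∀ t : ℝ, HasDerivAt g (⟪A (uH + t • e) - A uH, e⟫) t := by
    intro t
    have hP1 : HasDerivAt (fun s : ℝ => P (uH + s • e)) (⟪A (uH + t • e), e⟫) t := by
      have h0 := hP (uH + t • e) e
      have hshift : HasDerivAt (fun s : ℝ => s - t) 1 t := (hasDerivAt_id t).sub_const t
      have hshift0 : (fun s : ℝ => s - t) t = 0 := by simp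
      have hc : HasDerivAt ((fun s : ℝ => P (uH + t • e + s • e)) ∘ (fun s : ℝ => s - t))
          (⟪A (uH + t • e), e⟫ * 1) t := by
        apply HasDerivAt.comp
        · simpa using h0
        · exact hshift
      have heq : ((fun s : ℝ => P (uH + t • e + s • e)) ∘ (fun s : ℝ => s - t))
          = fun s : ℝ => P (uH + s • e) := by
        funext s
        simp only [Function.comp]
        congr 1
        rw [sub_smul]
        abel
      rw [heq, mul_one] at hc
      exact hc
    have hlin : HasDerivAt (fun s : ℝ => ⟪f, uH + s • e⟫) (⟪f, e⟫) t := by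
      have : HasDerivAt (fun s : ℝ => ⟪f, uH⟫ + s * ⟪f, e⟫) (⟪f, e⟫) t := by
        simpa using ((hasDerivAt_id t).mul_const ⟪f, e⟫).const_add ⟪f, uH⟫
      convert this using 2 with s
      rw [inner_add_right, real_inner_smul_right]
    have hgf : g = fun s : ℝ => P (uH + s • e) - ⟪f, uH + s • e⟫ := by
      funext s; rw [hg]; exact hE _
    rw [hgf]
    have := hP1.sub hlin
    rw [hfe] at this
    rw [inner_sub_left]
    exact this
  have hgd : ∀ t : ℝ, DifferentiableAt ℝ g t := fun t => (hg' t).differentiableAt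
  have hgc : ContinuousOn g (Set.Icc 0 1) := fun t _ => (hgd t).continuousAt.continuousWithinAt
  have hintOO : interior (Set.Icc (0:ℝ) 1) = Set.Ioo 0 1 := interior_Icc
  -- value of inner derivative bounds on (0,1)
  have hlow : ∀ t : ℝ, 0 < t → α * t * ‖e‖ ^ 2 ≤ ⟪A (uH + t • e) - A uH, e⟫ := by
    intro t ht
    have h := hmono uH (uH + t • e)
    have hsub : uH + t • e - uH = t • e := by abel
    rw [hsub] at h
    rw [norm_smul, Real.norm_eq_abs, abs_of_pos ht, real_inner_smul_right] at h
    nlinarith [h]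
  have hup : ∀ t : ℝ, 0 < t → ⟪A (uH + t • e) - A uH, e⟫ ≤ L * t * ‖e‖ ^ 2 := by
    intro t ht
    have h1 := real_inner_le_norm (A (uH + t • e) - A uH) e
    have h2 := hlip uH (uH + t • e)
    have hsub : uH + t • e - uH = t • e := by abel
    rw [hsub, norm_smul, Real.norm_eq_abs, abs_of_pos ht] at h2
    nlinarith [norm_nonneg e, norm_nonneg (A (uH + t • e) - A uH)]
  -- lower bound function
  have key : ∀ (c : ℝ), (∀ t ∈ Set.Ioo (0:ℝ) 1, c * t * ‖e‖ ^ 2 ≤ ⟪A (uH + t • e) - A uH, e⟫) →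
      c / 2 * ‖e‖ ^ 2 ≤ g 1 - g 0 := by
    intro c hc
    set φ : ℝ → ℝ := fun t => g t - c / 2 * t ^ 2 * ‖e‖ ^ 2 with hφ
    have hφ' : ∀ t : ℝ, HasDerivAt φ (⟪A (uH + t • e) - A uH, e⟫ - c * t * ‖e‖ ^ 2) t := by
      intro t
      have h2 : HasDerivAt (fun t : ℝ => c / 2 * t ^ 2 * ‖e‖ ^ 2) (c * t * ‖e‖ ^ 2) t := by
        have := ((hasDerivAt_pow 2 t).const_mul (c / 2)).mul_const (‖e‖ ^ 2)
        refine this.congr_deriv ?_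
        ring
      exact (hg' t).sub h2
    have hmon : MonotoneOn φ (Set.Icc 0 1) := by
      apply monotoneOn_of_deriv_nonneg (convex_Icc 0 1)
      · exact fun t _ => ((hφ' t).differentiableAt).continuousAt.continuousWithinAt
      · intro t ht
        exact ((hφ' t).differentiableAt).differentiableWithinAt
      · intro t ht
        rw [hintOO] at ht
        rw [(hφ' t).deriv]
        have := hc t ht
        linarith
    have h01 : φ 0 ≤ φ 1 := hmon (by norm_num) (by norm_num) (by norm_num)
    rw [hφ] at h01
    simp only at h01
    nlinarith [h01]
  have keyU : ∀ (c : ℝ), (∀ t ∈ Set.Ioo (0:ℝ) 1, ⟪A (uH + t • e) - A uH, e⟫ ≤ c * t * ‖e‖ ^ 2) →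
      g 1 - g 0 ≤ c / 2 * ‖e‖ ^ 2 := by
    intro c hc
    set φ : ℝ → ℝ := fun t => c / 2 * t ^ 2 * ‖e‖ ^ 2 - g t with hφ
    have hφ' : ∀ t : ℝ, HasDerivAt φ (c * t * ‖e‖ ^ 2 - ⟪A (uH + t • e) - A uH, e⟫) t := by
      intro t
      have h2 : HasDerivAt (fun t : ℝ => c / 2 * t ^ 2 * ‖e‖ ^ 2) (c * t * ‖e‖ ^ 2) t := by
        have := ((hasDerivAt_pow 2 t).const_mul (c / 2)).mul_const (‖e‖ ^ 2)
        refine this.congr_deriv ?_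
        ring
      exact h2.sub (hg' t)
    have hmon : MonotoneOn φ (Set.Icc 0 1) := by
      apply monotoneOn_of_deriv_nonneg (convex_Icc 0 1)
      · exact fun t _ => ((hφ' t).differentiableAt).continuousAt.continuousWithinAt
      · intro t ht
        exact ((hφ' t).differentiableAt).differentiableWithinAt
      · intro t ht
        rw [hintOO] at ht
        rw [(hφ' t).deriv]
        have := hc t ht
        linarith
    have h01 : φ 0 ≤ φ 1 := hmon (by norm_num) (by norm_num) (by norm_num)
    rw [hφ] at h01
    simp only at h01
    nlinarith [h01]
  have hg1 : g 1 = E vH := by rw [hg]; simp [he]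
  have hg0 : g 0 = E uH := by rw [hg]; simp
  have hL := key α (fun t ht => hlow t ht.1)
  have hU := keyU L (fun t ht => hup t ht.1)
  rw [hg1, hg0] at hL hU
  exact ⟨hL, hU⟩
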